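/- Let L > 0 and define f : ℂⁿ → ℂⁿ by f(z) = i·L·z. Then for any norm ‖·‖ on ℂⁿ: (a) f is Lipschitz with constant L, and L is the smallest Lipschitz constant of f; (b) for every z₀ ≠ 0, the function z(t) = exp(i·L·t)·z₀ is a nonconstant solution of z' = f(z) which is periodic with period 2π/L, and every period P > 0 of this solution satisfies P ≥ 2π/L (so its minimal period is exactly 2π/L). -/

import Mathlib

/-- sharpness of the bound `2π/L`, system (2.25) of the paper.
For `f z = i L z` on `ℂⁿ` with an arbitrary norm (modelled as a space `E` linearly
identified with `Fin n → ℂ`): (a) `L` is the smallest Lipschitz constant of `f`;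
(b) for every `z₀ ≠ 0`, `z t = exp (i L t) • z₀` is a nonconstant solution of `z' = f z`
that is `2π/L`-periodic, and every period `P > 0` of it satisfies `P ≥ 2π/L`. -/
theorem sharpness_two_pi_div_lipschitz
    (n : ℕ) (hn : 1 ≤ n) {E : Type*} [NormedAddCommGroup E] [NormedSpace ℂ E]
    (coords : E ≃ₗ[ℂ] (Fin n → ℂ))
    (L : ℝ) (hL : 0 < L)
    (f : E → E) (hf : ∀ x, f x = (Complex.I * (L : ℂ)) • x) :
    ((∀ x y, ‖f x - f y‖ ≤ L * ‖x - y‖) ∧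
      (∀ L' : ℝ, (∀ x y, ‖f x - f y‖ ≤ L' * ‖x - y‖) → L ≤ L')) ∧
    (∀ z₀ : E, z₀ ≠ 0 →
      (∀ t : ℝ, HasDerivAt (fun s : ℝ => Complex.exp (Complex.I * (L : ℂ) * (s : ℂ)) • z₀)
        (f (Complex.exp (Complex.I * (L : ℂ) * (t : ℂ)) • z₀)) t) ∧
      (∃ t₁ t₂ : ℝ, Complex.exp (Complex.I * (L : ℂ) * (t₁ : ℂ)) • z₀ ≠
        Complex.exp (Complex.I * (L : ℂ) * (t₂ : ℂ)) • z₀) ∧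
      (∀ t : ℝ, Complex.exp (Complex.I * (L : ℂ) * ((t + 2 * Real.pi / L : ℝ) : ℂ)) • z₀ =
        Complex.exp (Complex.I * (L : ℂ) * (t : ℂ)) • z₀) ∧
      (∀ P : ℝ, 0 < P →
        (∀ t : ℝ, Complex.exp (Complex.I * (L : ℂ) * ((t + P : ℝ) : ℂ)) • z₀ =
          Complex.exp (Complex.I * (L : ℂ) * (t : ℂ)) • z₀) →
        2 * Real.pi / L ≤ P)) := by
  have hnormIL : ‖Complex.I * (L : ℂ)‖ = L := by
    simp [norm_mul, Complex.norm_real, abs_of_pos hL]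
  constructor
  · constructor
    · intro x y
      rw [hf, hf, ← smul_sub, norm_smul, hnormIL]
    · intro L' hL'
      -- pick a nonzero vector
      obtain ⟨x, hx⟩ : ∃ x : E, x ≠ 0 := by
        refine ⟨coords.symm (fun _ => 1), fun h => ?_⟩
        have := congrArg coords h
        simp at this
        have := congrFun this ⟨0, hn⟩
        simp at this
      have h := hL' x 0
      rw [hf, hf, smul_zero, sub_zero, sub_zero, norm_smul, hnormIL] at h
      have hxpos : 0 < ‖x‖ := norm_pos_iff.mpr hx
      exact le_of_mul_le_mul_right h hxpos
  · intro z₀ hz₀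
    refine ⟨?_, ?_, ?_, ?_⟩
    · intro t
      have h1 : HasDerivAt (fun s : ℝ => Complex.exp (Complex.I * (L : ℂ) * (s : ℂ)))
          (Complex.exp (Complex.I * (L : ℂ) * (t : ℂ)) * (Complex.I * (L : ℂ))) t := by
        have hc : HasDerivAt (fun w : ℂ => Complex.exp (Complex.I * (L : ℂ) * w))
            (Complex.exp (Complex.I * (L : ℂ) * (t : ℂ)) * (Complex.I * (L : ℂ))) (t : ℂ) := by
          simpa [Function.comp_def] using (Complex.hasDerivAt_exp (Complex.I * (L : ℂ) * (t : ℂ))).comp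
            (t : ℂ) ((hasDerivAt_id (t : ℂ)).const_mul (Complex.I * (L : ℂ)))
        exact hc.comp_ofReal
      have := h1.smul_const z₀
      rw [hf]
      convert this using 1
      rw [smul_smul, mul_comm]
    · refine ⟨0, Real.pi / L, fun h => ?_⟩
      have hLne : (L : ℂ) ≠ 0 := by exact_mod_cast hL.ne'
      have h1 : Complex.I * (L : ℂ) * ((Real.pi / L : ℝ) : ℂ) = Real.pi * Complex.I := by
        have hd : ((Real.pi / L : ℝ) : ℂ) * L = Real.pi := by
          push_cast; field_simp
        linear_combination Complex.I * hd
      rw [h1, Complex.ofReal_zero, mul_zero, Complex.exp_zero, Complex.exp_pi_mul_I,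
        one_smul, neg_one_smul] at h
      have h2 : z₀ + z₀ = 0 := by nth_rewrite 1 [h]; exact neg_add_cancel z₀
      exact hz₀ ((smul_eq_zero.mp (by rw [two_smul]; exact h2)).resolve_left
        (by norm_num : (2 : ℂ) ≠ 0))
    · intro t
      have hLne : (L : ℂ) ≠ 0 := by exact_mod_cast hL.ne'
      have key : Complex.I * (L : ℂ) * ((t + 2 * Real.pi / L : ℝ) : ℂ)
          = Complex.I * (L : ℂ) * (t : ℂ) + 2 * Real.pi * Complex.I := by
        push_cast
        field_simp
      rw [key, Complex.exp_add, Complex.exp_two_pi_mul_I, mul_one]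
    · intro P hP hper
      have h := hper 0
      simp only [zero_add, Complex.ofReal_zero, mul_zero, Complex.exp_zero] at h
      have hone : Complex.exp (Complex.I * (L : ℂ) * (P : ℂ)) = 1 := by
        by_contra hne
        have : (Complex.exp (Complex.I * (L : ℂ) * (P : ℂ)) - 1) • z₀ = 0 := by
          rw [sub_smul, h, one_smul, sub_self]
        rw [smul_eq_zero] at this
        rcases this with h2 | h2
        · exact hne (by linear_combination h2)
        · exact hz₀ h2
      rw [Complex.exp_eq_one_iff] at hone
      obtain ⟨k, hk⟩ := hone
      have hIne : (Complex.I : ℂ) ≠ 0 := Complex.I_ne_zero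
      have hk' : (L : ℂ) * P = k * (2 * Real.pi) := by
        have h3 : (L : ℂ) * P * Complex.I = (k * (2 * Real.pi)) * Complex.I := by
          linear_combination hk
        exact mul_right_cancel₀ hIne h3
      have hkR : L * P = k * (2 * Real.pi) := by exact_mod_cast hk'
      have hkpos : 0 < (k : ℝ) := by
        by_contra hneg
        push_neg at hneg
        have : 0 < L * P := mul_pos hL hP
        nlinarith [Real.pi_pos]
      have hk1 : (1 : ℝ) ≤ k := by exact_mod_cast (by exact_mod_cast hkpos : 0 < k)
      rw [div_le_iff₀ hL]
      nlinarith [Real.pi_pos]
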